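/- Every simple graph on a finite vertex type whose edge set has at most 4 elements is 2-clique-colorable. (Together with the previous fact, this expresses the paper's claim that the 5-cycle is a smallest graph, in both number of vertices and number of edges, that is not 2-clique-colorable.) -/

import Mathlib

/-- A set of vertices is a maximal clique if it is a clique and no strict
superset of it is a clique. -/
def IsMaximalClique {V : Type*} (G : SimpleGraph V) (s : Set V) : Prop :=
  G.IsClique s ∧ ∀ t : Set V, G.IsClique t → s ⊆ t → s = t

/-- A set of vertices is monochromatic under a 2-coloring `c` if `c` is
constant on it. -/
def MonochromaticOn {V : Type*} (c : V → Bool) (s : Set V) : Prop :=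
  ∀ u ∈ s, ∀ v ∈ s, c u = c v

/-- `G` is 2-clique-colorable if some 2-coloring makes every maximal clique
with at least two vertices nonmonochromatic. -/
def TwoCliqueColorable {V : Type*} (G : SimpleGraph V) : Prop :=
  ∃ c : V → Bool, ∀ s : Set V, IsMaximalClique G s →
    (∃ u ∈ s, ∃ v ∈ s, u ≠ v) → ¬ MonochromaticOn c s

/-- A graph `G` satisfies a signed edge condition `((u, v), sign)` if `u` and
`v` are adjacent when the sign is `true`, and nonadjacent when it is `false`. -/
def SatisfiesCond {m : ℕ} (G : SimpleGraph (Fin m)) (c : (Fin m × Fin m) × Bool) : Prop :=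
  if c.2 = true then G.Adj c.1.1 c.1.2 else ¬ G.Adj c.1.1 c.1.2

/-- If a graph with at most four edges contains four pairwise distinct edges,
those are all its edges. -/
lemma edgeSet_eq_four_aux {V : Type*} [Fintype V] (G : SimpleGraph V)
    (hE : G.edgeSet.ncard ≤ 4) {e1 e2 e3 e4 : Sym2 V}
    (m1 : e1 ∈ G.edgeSet) (m2 : e2 ∈ G.edgeSet) (m3 : e3 ∈ G.edgeSet) (m4 : e4 ∈ G.edgeSet)
    (h12 : e1 ≠ e2) (h13 : e1 ≠ e3) (h14 : e1 ≠ e4)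
    (h23 : e2 ≠ e3) (h24 : e2 ≠ e4) (h34 : e3 ≠ e4) :
    G.edgeSet = {e1, e2, e3, e4} := by
  have hfin : G.edgeSet.Finite := Set.toFinite _
  have hsub : ({e1, e2, e3, e4} : Set (Sym2 V)) ⊆ G.edgeSet := by
    intro z hz
    simp only [Set.mem_insert_iff, Set.mem_singleton_iff] at hz
    rcases hz with rfl | rfl | rfl | rfl <;> assumption
  have hcard : ({e1, e2, e3, e4} : Set (Sym2 V)).ncard = 4 := by
    rw [Set.ncard_insert_of_notMem (by simp [h12, h13, h14]) (Set.toFinite _),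
        Set.ncard_insert_of_notMem (by simp [h23, h24]) (Set.toFinite _),
        Set.ncard_pair h34]
  exact (Set.eq_of_subset_of_ncard_le hsub (by rw [hcard]; exact hE) hfin).symm

/-- A triangle-free graph with at most four edges has a proper 2-coloring. -/
lemma bip_of_le_four {V : Type*} [Fintype V] :
    ∀ (n : ℕ) (G : SimpleGraph V), G.edgeSet.ncard = n → n ≤ 4 →
    (∀ a b c, G.Adj a b → G.Adj b c → G.Adj a c → False) →
    ∃ f : V → Bool, ∀ u v, G.Adj u v → f u ≠ f v := by
  intro n
  induction n using Nat.strong_induction_on with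
  | _ n ih =>
  intro G hn h4 htf
  classical
  by_cases hne : ∃ u v, G.Adj u v
  · by_cases hleaf : ∃ u v, G.Adj u v ∧ ∀ w, G.Adj u w → w = v
    · obtain ⟨u, v, huv, hu⟩ := hleaf
      have hmem : s(u, v) ∈ G.edgeSet := G.mem_edgeSet.mpr huv
      have hfin : G.edgeSet.Finite := Set.toFinite _
      have hn0 : n ≠ 0 := by
        intro h
        have : G.edgeSet = ∅ := by
          rw [← Set.ncard_eq_zero hfin] at *; omega
        simp [this] at hmem
      have hn' : (G.deleteEdges {s(u, v)}).edgeSet.ncard = n - 1 := by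
        rw [SimpleGraph.edgeSet_deleteEdges,
          Set.ncard_diff_singleton_of_mem hmem, hn]
      have hle : G.deleteEdges {s(u, v)} ≤ G := SimpleGraph.deleteEdges_le _
      obtain ⟨f, hf⟩ := ih (n - 1) (by omega) (G.deleteEdges {s(u, v)}) hn' (by omega)
        (fun a b c h1 h2 h3 => htf a b c (hle h1) (hle h2) (hle h3))
      refine ⟨fun x => if x = u then !(f v) else f x, ?_⟩
      intro x y hxy
      by_cases hxu : x = u
      · subst hxu
        have hyv : y = v := hu y hxy
        subst hyv
        simp [huv.ne']
      · by_cases hyu : y = u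
        · subst hyu
          have hxv : x = v := hu x hxy.symm
          subst hxv
          simp [huv.ne']
        · have hadj' : (G.deleteEdges {s(u, v)}).Adj x y := by
            rw [SimpleGraph.deleteEdges_adj]
            refine ⟨hxy, ?_⟩
            intro h
            rw [Set.mem_singleton_iff] at h
            rcases Sym2.eq_iff.mp h with ⟨h1, h2⟩ | ⟨h1, h2⟩
            · exact hxu h1
            · exact hyu h2
          have := hf x y hadj'
          simpa [hxu, hyu] using this
    · push_neg at hleaf
      obtain ⟨v0, v1, h01⟩ := hne
      obtain ⟨v2, h12, h20⟩ := hleaf v1 v0 h01.symm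
      obtain ⟨v3, h23, h31⟩ := hleaf v2 v1 h12.symm
      have h30 : v3 ≠ v0 := by
        intro h
        exact htf v0 v1 v2 h01 h12 (by rw [← h]; exact h23.symm)
      obtain ⟨v4, h34, h42⟩ := hleaf v3 v2 h23.symm
      have h41 : v4 ≠ v1 := by
        intro h
        exact htf v1 v2 v3 h12 h23 (by rw [← h]; exact h34.symm)
      have n01 : v0 ≠ v1 := h01.ne
      have n12 : v1 ≠ v2 := h12.ne
      have n23 : v2 ≠ v3 := h23.ne
      have n02 : v0 ≠ v2 := Ne.symm h20
      have n13 : v1 ≠ v3 := Ne.symm h31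
      have n03 : v0 ≠ v3 := Ne.symm h30
      have hE4 : G.edgeSet.ncard ≤ 4 := by omega
      by_cases h40 : v4 = v0
      · have h34' : G.Adj v3 v0 := h40 ▸ h34
        have hEq : G.edgeSet = {s(v0, v1), s(v1, v2), s(v2, v3), s(v3, v0)} :=
          edgeSet_eq_four_aux G hE4 (G.mem_edgeSet.mpr h01) (G.mem_edgeSet.mpr h12)
            (G.mem_edgeSet.mpr h23) (G.mem_edgeSet.mpr h34')
            (by simp [Sym2.eq_iff, n01, n01.symm, n02, n02.symm, n12, n12.symm])
            (by simp [Sym2.eq_iff, n02, n02.symm, n03, n03.symm, n13, n13.symm])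
            (by simp [Sym2.eq_iff, n03, n03.symm, n13, n13.symm, n01, n01.symm])
            (by simp [Sym2.eq_iff, n12, n12.symm, n13, n13.symm, n23, n23.symm])
            (by simp [Sym2.eq_iff, n13, n13.symm, n01, n01.symm, n12, n12.symm, n02, n02.symm])
            (by simp [Sym2.eq_iff, n23, n23.symm, n02, n02.symm, n03, n03.symm])
        refine ⟨fun x => if x = v0 ∨ x = v2 then true else false, ?_⟩
        intro x y hxy
        have hm : s(x, y) ∈ G.edgeSet := G.mem_edgeSet.mpr hxy
        rw [hEq] at hm
        simp only [Set.mem_insert_iff, Set.mem_singleton_iff, Sym2.eq_iff] at hm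
        rcases hm with (⟨rfl, rfl⟩ | ⟨rfl, rfl⟩) | (⟨rfl, rfl⟩ | ⟨rfl, rfl⟩) |
          (⟨rfl, rfl⟩ | ⟨rfl, rfl⟩) | (⟨rfl, rfl⟩ | ⟨rfl, rfl⟩) <;>
          simp [n01, n12, n23, n02, n13, n03, n01.symm, n12.symm, n23.symm,
            n02.symm, n13.symm, n03.symm]
      · exfalso
        have n04 : v0 ≠ v4 := Ne.symm h40
        have n34 : v3 ≠ v4 := h34.ne
        have hEq : G.edgeSet = {s(v0, v1), s(v1, v2), s(v2, v3), s(v3, v4)} :=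
          edgeSet_eq_four_aux G hE4 (G.mem_edgeSet.mpr h01) (G.mem_edgeSet.mpr h12)
            (G.mem_edgeSet.mpr h23) (G.mem_edgeSet.mpr h34)
            (by simp [Sym2.eq_iff, n01, n02])
            (by simp [Sym2.eq_iff, n02, n03])
            (by simp [Sym2.eq_iff, n03, n04])
            (by simp [Sym2.eq_iff, n12, n13])
            (by simp [Sym2.eq_iff, n13, h41.symm])
            (by simp [Sym2.eq_iff, n23, h42.symm])
        obtain ⟨z, h0z, hz1⟩ := hleaf v0 v1 h01
        have hm : s(v0, z) ∈ G.edgeSet := G.mem_edgeSet.mpr h0z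
        rw [hEq] at hm
        simp [Sym2.eq_iff, n01, n02, n03, n04, hz1] at hm
  · push_neg at hne
    exact ⟨fun _ => true, fun u v h => absurd h (hne u v)⟩

/-- Every graph with at most 4 edges (on a finite vertex type) is
2-clique-colorable. -/
theorem twoCliqueColorable_of_edges_le_four {V : Type*} [Fintype V]
    (G : SimpleGraph V) (hE : G.edgeSet.ncard ≤ 4) :
    TwoCliqueColorable G := by
  classical
  by_cases htri : ∃ a b c, G.Adj a b ∧ G.Adj b c ∧ G.Adj a c
  · obtain ⟨a, b, c, hab, hbc, hac⟩ := htri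
    have hT : G.IsClique ({a, b, c} : Set V) := by
      intro x hx y hy hxy
      simp only [Set.mem_insert_iff, Set.mem_singleton_iff] at hx hy
      rcases hx with rfl | rfl | rfl <;> rcases hy with rfl | rfl | rfl <;>
        first
          | exact absurd rfl hxy
          | exact hab | exact hab.symm | exact hbc | exact hbc.symm
          | exact hac | exact hac.symm
    by_cases hall : ∀ x y, G.Adj x y → (x = a ∨ x = b ∨ x = c) ∧ (y = a ∨ y = b ∨ y = c)
    · refine ⟨fun x => if x = a then true else false, ?_⟩
      rintro s ⟨hcl, hmax⟩ ⟨x0, hx0, y0, hy0, hxy0⟩ hmono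
      have hpair : ∀ z ∈ s, ∃ w ∈ s, z ≠ w := by
        intro z hz
        by_cases h : z = x0
        · exact ⟨y0, hy0, by rw [h]; exact hxy0⟩
        · exact ⟨x0, hx0, h⟩
      have hsT : s ⊆ ({a, b, c} : Set V) := by
        intro z hz
        obtain ⟨w, hw, hzw⟩ := hpair z hz
        have hadj : G.Adj z w := hcl hz hw hzw
        have := (hall z w hadj).1
        simpa [Set.mem_insert_iff, Set.mem_singleton_iff] using this
      have hST := hmax _ hT hsT
      have ha : a ∈ s := by rw [hST]; simp
      have hb : b ∈ s := by rw [hST]; simp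
      have := hmono a ha b hb
      simp [hab.ne'] at this
    · push_neg at hall
      obtain ⟨x, y, hxy, hnand⟩ := hall
      have key : ∃ u v, G.Adj u v ∧ v ≠ a ∧ v ≠ b ∧ v ≠ c := by
        by_cases hxT : x = a ∨ x = b ∨ x = c
        · have := hnand hxT
          exact ⟨x, y, hxy, by tauto⟩
        · push_neg at hxT
          exact ⟨y, x, hxy.symm, hxT.1, hxT.2.1, hxT.2.2⟩
      obtain ⟨u, v, huv, hva, hvb, hvc⟩ := key
      have hvu : v ≠ u := huv.ne'
      have hEq : G.edgeSet = {s(a, b), s(b, c), s(a, c), s(u, v)} :=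
        edgeSet_eq_four_aux G hE (G.mem_edgeSet.mpr hab) (G.mem_edgeSet.mpr hbc)
          (G.mem_edgeSet.mpr hac) (G.mem_edgeSet.mpr huv)
          (by simp [Sym2.eq_iff, hab.ne, hab.ne', hbc.ne, hbc.ne', hac.ne, hac.ne'])
          (by simp [Sym2.eq_iff, hab.ne, hab.ne', hbc.ne, hbc.ne', hac.ne, hac.ne'])
          (by simp [Sym2.eq_iff, hva, hvb, hva.symm, hvb.symm])
          (by simp [Sym2.eq_iff, hab.ne, hab.ne', hbc.ne, hbc.ne', hac.ne, hac.ne'])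
          (by simp [Sym2.eq_iff, hvb, hvc, hvb.symm, hvc.symm])
          (by simp [Sym2.eq_iff, hva, hvc, hva.symm, hvc.symm])
      by_cases hu : u = a ∨ u = b ∨ u = c
      · refine ⟨fun x => if x = u then true else false, ?_⟩
        rintro s ⟨hcl, hmax⟩ ⟨x0, hx0, y0, hy0, hxy0⟩ hmono
        have hpair : ∀ z ∈ s, ∃ w ∈ s, z ≠ w := by
          intro z hz
          by_cases h : z = x0
          · exact ⟨y0, hy0, by rw [h]; exact hxy0⟩
          · exact ⟨x0, hx0, h⟩
        by_cases hvs : v ∈ s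
        · obtain ⟨w, hw, hvw⟩ := hpair v hvs
          have hadj : G.Adj v w := hcl hvs hw hvw
          have hm : s(v, w) ∈ G.edgeSet := G.mem_edgeSet.mpr hadj
          rw [hEq] at hm
          simp only [Set.mem_insert_iff, Set.mem_singleton_iff, Sym2.eq_iff] at hm
          have hwu : w = u := by tauto
          have hus : u ∈ s := hwu ▸ hw
          have := hmono u hus v hvs
          simp [hvu] at this
        · have hsT : s ⊆ ({a, b, c} : Set V) := by
            intro z hz
            obtain ⟨w, hw, hzw⟩ := hpair z hz
            have hadj : G.Adj z w := hcl hz hw hzw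
            have hm : s(z, w) ∈ G.edgeSet := G.mem_edgeSet.mpr hadj
            rw [hEq] at hm
            simp only [Set.mem_insert_iff, Set.mem_singleton_iff, Sym2.eq_iff] at hm
            simp only [Set.mem_insert_iff, Set.mem_singleton_iff]
            rcases hm with h | h | h | h
            · tauto
            · tauto
            · tauto
            · rcases h with ⟨rfl, rfl⟩ | ⟨rfl, rfl⟩
              · exact absurd hw hvs
              · exact absurd hz hvs
          have hST := hmax _ hT hsT
          have ha : a ∈ s := by rw [hST]; simp
          have hb : b ∈ s := by rw [hST]; simp
          have hc : c ∈ s := by rw [hST]; simp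
          rcases hu with rfl | rfl | rfl
          · have := hmono u ha b hb
            simp [hab.ne'] at this
          · have := hmono u hb a ha
            simp [hab.ne] at this
          · have := hmono u hc a ha
            simp [hac.ne] at this
      · push_neg at hu
        refine ⟨fun x => if x = a ∨ x = u then true else false, ?_⟩
        rintro s ⟨hcl, hmax⟩ ⟨x0, hx0, y0, hy0, hxy0⟩ hmono
        have hpair : ∀ z ∈ s, ∃ w ∈ s, z ≠ w := by
          intro z hz
          by_cases h : z = x0
          · exact ⟨y0, hy0, by rw [h]; exact hxy0⟩
          · exact ⟨x0, hx0, h⟩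
        by_cases hus : u ∈ s ∧ v ∈ s
        · have := hmono u hus.1 v hus.2
          simp [hva, hvu] at this
        · have hsT : s ⊆ ({a, b, c} : Set V) := by
            intro z hz
            obtain ⟨w, hw, hzw⟩ := hpair z hz
            have hadj : G.Adj z w := hcl hz hw hzw
            have hm : s(z, w) ∈ G.edgeSet := G.mem_edgeSet.mpr hadj
            rw [hEq] at hm
            simp only [Set.mem_insert_iff, Set.mem_singleton_iff, Sym2.eq_iff] at hm
            simp only [Set.mem_insert_iff, Set.mem_singleton_iff]
            rcases hm with h | h | h | h
            · tauto
            · tauto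
            · tauto
            · rcases h with ⟨rfl, rfl⟩ | ⟨rfl, rfl⟩
              · exact absurd ⟨hz, hw⟩ hus
              · exact absurd ⟨hw, hz⟩ hus
          have hST := hmax _ hT hsT
          have ha : a ∈ s := by rw [hST]; simp
          have hb : b ∈ s := by rw [hST]; simp
          have := hmono a ha b hb
          simp [hab.ne', (hu.2.1).symm] at this
  · obtain ⟨f, hf⟩ := bip_of_le_four G.edgeSet.ncard G rfl hE
      (fun a b c h1 h2 h3 => htri ⟨a, b, c, h1, h2, h3⟩)
    refine ⟨f, ?_⟩
    rintro s ⟨hcl, _⟩ ⟨x, hx, y, hy, hxy⟩ hmono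
    exact hf x y (hcl hx hy hxy) (hmono x hx y hy)
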